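/- Let σ, r, K > 0 and x* ∈ ℝ. Define w : ℝ → ℝ by w(x) = (rK/σ²)(exp(√2·(x−x*)) − 1) for x ≤ x* and w(x) = (rK/σ²)((x−x*)² + √2·(x−x*)) for x ≥ x*. Then w is continuously differentiable on ℝ, w(x*) = 0, w tends to −rK/σ² as x → −∞, and w satisfies (σ²/2)·w''(x) = rK + σ²·w(x) for all x < x* and (σ²/2)·w''(x) = rK for all x > x*. -/

import Mathlib

open Real Filter

theorem put_inner_correction (σ r K xstar : ℝ) (hσ : 0 < σ) (hr : 0 < r) (hK : 0 < K)
    (w : ℝ → ℝ)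
    (hw : ∀ x : ℝ, w x =
      if x ≤ xstar then (r * K / σ ^ 2) * (Real.exp (Real.sqrt 2 * (x - xstar)) - 1)
      else (r * K / σ ^ 2) * ((x - xstar) ^ 2 + Real.sqrt 2 * (x - xstar))) :
    ContDiff ℝ 1 w ∧
    w xstar = 0 ∧
    Tendsto w atBot (nhds (-(r * K / σ ^ 2))) ∧
    (∀ x < xstar, σ ^ 2 / 2 * deriv (deriv w) x = r * K + σ ^ 2 * w x) ∧
    (∀ x > xstar, σ ^ 2 / 2 * deriv (deriv w) x = r * K) := by
  have hσ2 : (σ : ℝ) ^ 2 ≠ 0 := by positivity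
  set c : ℝ := r * K / σ ^ 2 with hc
  have hcr : σ ^ 2 * c = r * K := by rw [hc]; field_simp
  have h2 : Real.sqrt 2 * Real.sqrt 2 = 2 := Real.mul_self_sqrt (by norm_num)
  set fL : ℝ → ℝ := fun x => c * (Real.exp (Real.sqrt 2 * (x - xstar)) - 1) with hfL
  set fR : ℝ → ℝ := fun x => c * ((x - xstar) ^ 2 + Real.sqrt 2 * (x - xstar)) with hfR
  set w' : ℝ → ℝ := fun x => if x ≤ xstar then c * Real.sqrt 2 * Real.exp (Real.sqrt 2 * (x - xstar))
      else c * (2 * (x - xstar) + Real.sqrt 2) with hw'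
  have harg : ∀ x : ℝ, HasDerivAt (fun x : ℝ => Real.sqrt 2 * (x - xstar)) (Real.sqrt 2) x := by
    intro x
    simpa using ((hasDerivAt_id x).sub_const xstar).const_mul (Real.sqrt 2)
  have hL : ∀ x : ℝ, HasDerivAt fL (c * Real.sqrt 2 * Real.exp (Real.sqrt 2 * (x - xstar))) x := by
    intro x
    have := (((harg x).exp).sub_const 1).const_mul c
    exact this.congr_deriv (by ring)
  have hR : ∀ x : ℝ, HasDerivAt fR (c * (2 * (x - xstar) + Real.sqrt 2)) x := by
    intro x
    have h1 : HasDerivAt (fun x : ℝ => (x - xstar) ^ 2) (2 * (x - xstar)) x := by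
      simpa using ((hasDerivAt_id x).sub_const xstar).fun_pow 2
    have := (h1.add (harg x)).const_mul c
    exact this
  have hwL : ∀ x ∈ Set.Iic xstar, w x = fL x := by
    intro x hx
    rw [hw x, if_pos (Set.mem_Iic.mp hx)]
  have hwR : ∀ x ∈ Set.Ici xstar, w x = fR x := by
    intro x hx
    rcases eq_or_lt_of_le (Set.mem_Ici.mp hx) with h | h
    · rw [hw x, if_pos h.ge, ← h]; simp [hfR]
    · rw [hw x, if_neg (not_le.2 h)]
  have hwL' : ∀ x ∈ Set.Iio xstar, w' x = c * Real.sqrt 2 * Real.exp (Real.sqrt 2 * (x - xstar)) := by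
    intro x hx; rw [hw']; simp only []
    rw [if_pos (le_of_lt (Set.mem_Iio.mp hx))]
  have hwR' : ∀ x ∈ Set.Ioi xstar, w' x = c * (2 * (x - xstar) + Real.sqrt 2) := by
    intro x hx; rw [hw']; simp only []
    rw [if_neg (not_le.2 (Set.mem_Ioi.mp hx))]
  -- w has derivative w' everywhere
  have hdiff : ∀ x : ℝ, HasDerivAt w (w' x) x := by
    intro x
    rcases lt_trichotomy x xstar with h | h | h
    · have hev : w =ᶠ[nhds x] fL :=
        Filter.eventuallyEq_of_mem (Iio_mem_nhds h) (fun y hy => hwL y (Set.mem_Iic.mpr (le_of_lt (Set.mem_Iio.mp hy))))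
      have := (hL x).congr_of_eventuallyEq hev
      simpa [hw', le_of_lt h] using this
    · subst h
      have h1 : HasDerivWithinAt w (c * Real.sqrt 2) (Set.Iic x) x := by
        have := ((hL x).hasDerivWithinAt (s := Set.Iic x)).congr hwL (hwL x Set.self_mem_Iic)
        simpa using this
      have h2 : HasDerivWithinAt w (c * Real.sqrt 2) (Set.Ici x) x := by
        have := ((hR x).hasDerivWithinAt (s := Set.Ici x)).congr hwR (hwR x Set.self_mem_Ici)
        simpa [mul_comm] using this
      have h3 := h1.union h2
      rw [Set.Iic_union_Ici] at h3
      have := h3.hasDerivAt Filter.univ_mem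
      simpa [hw'] using this
    · have hev : w =ᶠ[nhds x] fR :=
        Filter.eventuallyEq_of_mem (Ioi_mem_nhds h) (fun y hy => hwR y (Set.mem_Ici.mpr (le_of_lt (Set.mem_Ioi.mp hy))))
      have := (hR x).congr_of_eventuallyEq hev
      simpa [hw', not_le.2 h] using this
  have hderiv : deriv w = w' := funext fun x => (hdiff x).deriv
  have hcont : Continuous w' := by
    rw [hw']
    have c1 : Continuous fun x : ℝ => c * Real.sqrt 2 * Real.exp (Real.sqrt 2 * (x - xstar)) :=
      continuous_const.mul (Real.continuous_exp.comp
        (continuous_const.mul (continuous_id.sub continuous_const)))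
    have c2 : Continuous fun x : ℝ => c * (2 * (x - xstar) + Real.sqrt 2) :=
      continuous_const.mul ((continuous_const.mul (continuous_id.sub continuous_const)).add
        continuous_const)
    apply Continuous.if_le c1 c2 continuous_id continuous_const
    intro x hx; subst hx; simp
  refine ⟨?_, ?_, ?_, ?_, ?_⟩
  · rw [contDiff_one_iff_deriv]
    exact ⟨fun x => (hdiff x).differentiableAt, hderiv ▸ hcont⟩
  · rw [hw xstar]; simp
  · have hev : w =ᶠ[atBot] fL :=
      Filter.eventuallyEq_of_mem (Iic_mem_atBot xstar) hwL
    have h1 : Tendsto (fun x : ℝ => Real.sqrt 2 * (x - xstar)) atBot atBot := by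
      apply Tendsto.const_mul_atBot (by positivity : (0:ℝ) < Real.sqrt 2)
      exact tendsto_atBot_add_const_right atBot (-xstar) tendsto_id
    have h3 : Tendsto fL atBot (nhds (c * (0 - 1))) :=
      ((Real.tendsto_exp_atBot.comp h1).sub_const 1).const_mul c
    have h4 : Tendsto w atBot (nhds (c * (0 - 1))) := Tendsto.congr' hev.symm h3
    convert h4 using 1
    rw [hc]; ring
  · intro x hx
    have hev : deriv w =ᶠ[nhds x] fun y => c * Real.sqrt 2 * Real.exp (Real.sqrt 2 * (y - xstar)) := by
      rw [hderiv]
      exact Filter.eventuallyEq_of_mem (Iio_mem_nhds hx) hwL'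
    have hd2 : HasDerivAt (fun y => c * Real.sqrt 2 * Real.exp (Real.sqrt 2 * (y - xstar)))
        (c * Real.sqrt 2 * (Real.exp (Real.sqrt 2 * (x - xstar)) * Real.sqrt 2)) x :=
      ((harg x).exp).const_mul (c * Real.sqrt 2)
    rw [hev.deriv_eq, hd2.deriv, hw x, if_pos hx.le]
    linear_combination (σ ^ 2 * c * Real.exp (Real.sqrt 2 * (x - xstar)) / 2) * h2 + hcr
  · intro x hx
    have hev : deriv w =ᶠ[nhds x] fun y => c * (2 * (y - xstar) + Real.sqrt 2) := by
      rw [hderiv]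
      exact Filter.eventuallyEq_of_mem (Ioi_mem_nhds hx) hwR'
    have hd2 : HasDerivAt (fun y : ℝ => c * (2 * (y - xstar) + Real.sqrt 2)) (c * 2) x := by
      have h1 : HasDerivAt (fun y : ℝ => 2 * (y - xstar) + Real.sqrt 2) 2 x := by
        simpa using (((hasDerivAt_id x).sub_const xstar).const_mul 2).add_const (Real.sqrt 2)
      simpa [mul_comm] using h1.const_mul c
    rw [hev.deriv_eq, hd2.deriv]
    linear_combination hcr
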